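/- For all real numbers t > 0 and u with 0 < u ≤ t, the inequality (u + t)·ln(1 + t/u) − t ≥ (2 ln 2 − 1)·t holds, with equality if and only if u = t. Equivalently, the minimum over u ∈ (0, t] of (u + t)·ln(1 + t/u) − t equals (2 ln 2 − 1)·t and is attained at u = t. -/

import Mathlib

noncomputable section

private lemma aux_deriv (t : ℝ) (ht : 0 < t) (u : ℝ) (hu : 0 < u) :
    HasDerivAt (fun u : ℝ => (u + t) * Real.log (1 + t / u))
      (Real.log (1 + t / u) - t / u) u := by
  have hu0 : u ≠ 0 := ne_of_gt hu
  have hpos : 0 < 1 + t / u := by positivity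
  have h1 : HasDerivAt (fun u : ℝ => 1 + t / u) (t * -(u ^ 2)⁻¹) u := by
    simpa [div_eq_mul_inv] using ((hasDerivAt_inv hu0).const_mul t).const_add 1
  have h2 : HasDerivAt (fun u : ℝ => Real.log (1 + t / u))
      ((1 + t / u)⁻¹ * (t * -(u ^ 2)⁻¹)) u := by
    simpa [div_eq_mul_inv, mul_comm] using (h1.log (ne_of_gt hpos))
  have h3 : HasDerivAt (fun u : ℝ => (u + t) * Real.log (1 + t / u))
      (1 * Real.log (1 + t / u) + (u + t) * ((1 + t / u)⁻¹ * (t * -(u ^ 2)⁻¹))) u :=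
    ((hasDerivAt_id u).add_const t).mul h2
  convert h3 using 1
  field_simp
  ring

private lemma aux_anti (t : ℝ) (ht : 0 < t) :
    StrictAntiOn (fun u : ℝ => (u + t) * Real.log (1 + t / u)) (Set.Ioi 0) := by
  apply StrictAntiOn.mono (s := Set.Ioi (0:ℝ)) ?_ le_rfl
  apply strictAntiOn_of_deriv_neg (convex_Ioi 0)
  · apply ContinuousOn.mul (by fun_prop)
    apply ContinuousOn.log
    · exact continuousOn_const.add (continuousOn_const.div continuousOn_id
        (fun x hx => ne_of_gt hx))
    · intro x hx
      have hx' : 0 < x := hx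
      positivity
  · intro x hx
    rw [interior_Ioi] at hx
    have hx' : (0:ℝ) < x := hx
    rw [(aux_deriv t ht x hx').deriv]
    have hlog : Real.log (1 + t / x) < t / x := by
      have hpos : 0 < t / x := by positivity
      have := Real.log_lt_sub_one_of_pos (x := 1 + t / x) (by positivity)
        (by intro h; nlinarith)
      linarith
    linarith

private lemma aux_eq (t : ℝ) (ht : 0 < t) :
    (t + t) * Real.log (1 + t / t) - t = (2 * Real.log 2 - 1) * t := by
  rw [div_self (ne_of_gt ht)]
  norm_num
  ring

private lemma aux_lt (t : ℝ) (ht : 0 < t) (u : ℝ) (hu : 0 < u) (hut : u < t) :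
    (2 * Real.log 2 - 1) * t < (u + t) * Real.log (1 + t / u) - t := by
  have := aux_anti t ht (Set.mem_Ioi.2 hu) (Set.mem_Ioi.2 ht) hut
  simp only at this
  have h := aux_eq t ht
  linarith

/-- for real `t > 0` and `0 < u ≤ t`,
`(u + t)·ln(1 + t/u) − t ≥ (2 ln 2 − 1)·t`, with equality iff `u = t`;
equivalently the minimum over `u ∈ (0, t]` of `(u + t)·ln(1 + t/u) − t` equals
`(2 ln 2 − 1)·t` and is attained at `u = t`. -/
theorem statement14 (t : ℝ) (ht : 0 < t) :
    (∀ u : ℝ, 0 < u → u ≤ t →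
      (2 * Real.log 2 - 1) * t ≤ (u + t) * Real.log (1 + t / u) - t) ∧
    (∀ u : ℝ, 0 < u → u ≤ t →
      ((u + t) * Real.log (1 + t / u) - t = (2 * Real.log 2 - 1) * t ↔ u = t)) ∧
    IsLeast {v : ℝ | ∃ u : ℝ, 0 < u ∧ u ≤ t ∧ v = (u + t) * Real.log (1 + t / u) - t}
      ((2 * Real.log 2 - 1) * t) := by
  have hle : ∀ u : ℝ, 0 < u → u ≤ t →
      (2 * Real.log 2 - 1) * t ≤ (u + t) * Real.log (1 + t / u) - t := by
    intro u hu hut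
    rcases eq_or_lt_of_le hut with h | h
    · subst h; exact (aux_eq u ht).ge
    · exact (aux_lt t ht u hu h).le
  refine ⟨hle, ?_, ⟨⟨t, ht, le_rfl, (aux_eq t ht).symm⟩, ?_⟩⟩
  · intro u hu hut
    constructor
    · intro h
      by_contra hne
      have := aux_lt t ht u hu (lt_of_le_of_ne hut hne)
      linarith
    · rintro rfl; exact aux_eq u ht
  · rintro v ⟨u, hu, hut, rfl⟩
    exact hle u hu hut
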